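/- Let a⁺ > 0 > a⁻ and ρ̄ > 0, Γ̄ > 0. The system of four equations consisting of (i) a⁺(ρu)^R − a⁻(ρu)^L = (a⁺−a⁻)(ρu)̄, (ii) a⁺E^R − a⁻E^L = (a⁺−a⁻)Ē, (iii) (ρu)^L/ρ^L = (ρu)^R/ρ^R, and (iv) (E^L − ((ρu)^L)²/(2ρ^L) − Π^L)/Γ^L = (E^R − ((ρu)^R)²/(2ρ^R) − Π^R)/Γ^R, where ρ^{L,R}, Γ^{L,R}, Π^{L,R} are given positive parameters additionally satisfying a⁺ρ^R − a⁻ρ^L = (a⁺−a⁻)ρ̄, a⁺Γ^R − a⁻Γ^L = (a⁺−a⁻)Γ̄, a⁺Π^R − a⁻Π^L = (a⁺−a⁻)Π̄, has the unique solution given by the formulas (2.2.9) of the paper: (ρu)^L = (ρ^L/ρ̄)(ρu)̄, (ρu)^R = (ρ^R/ρ̄)(ρu)̄, E^L = (Γ^L/Γ̄)Ē + a⁺(Γ^Rρ^L − Γ^Lρ^R)((ρu)̄)²/(2(a⁺−a⁻)Γ̄ρ̄²) + a⁺(Γ^RΠ^L − Γ^LΠ^R)/((a⁺−a⁻)Γ̄),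 and E^R analogously with a⁻ in place of a⁺ in the correction terms. -/

import Mathlib

theorem subcell_momentum_energy_unique_solution
    (ap am ρ m E Γ PI : ℝ)
    (hap : 0 < ap) (ham : am < 0) (hρ : 0 < ρ) (hΓ : 0 < Γ)
    (ρL ρR ΓL ΓR PIL PIR : ℝ)
    (hρLpos : 0 < ρL) (hρRpos : 0 < ρR) (hΓLpos : 0 < ΓL) (hΓRpos : 0 < ΓR)
    (hPILpos : 0 < PIL) (hPIRpos : 0 < PIR)
    (hρcons : ap * ρR - am * ρL = (ap - am) * ρ)
    (hΓcons : ap * ΓR - am * ΓL = (ap - am) * Γ)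
    (hPIcons : ap * PIR - am * PIL = (ap - am) * PI)
    (mL mR EL ER : ℝ) :
    (ap * mR - am * mL = (ap - am) * m ∧
     ap * ER - am * EL = (ap - am) * E ∧
     mL / ρL = mR / ρR ∧
     (EL - mL ^ 2 / (2 * ρL) - PIL) / ΓL = (ER - mR ^ 2 / (2 * ρR) - PIR) / ΓR)
    ↔
    (mL = (ρL / ρ) * m ∧ mR = (ρR / ρ) * m ∧
     EL = (ΓL / Γ) * E
        + ap * (ΓR * ρL - ΓL * ρR) * m ^ 2 / (2 * (ap - am) * Γ * ρ ^ 2)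
        + ap * (ΓR * PIL - ΓL * PIR) / ((ap - am) * Γ) ∧
     ER = (ΓR / Γ) * E
        + am * (ΓR * ρL - ΓL * ρR) * m ^ 2 / (2 * (ap - am) * Γ * ρ ^ 2)
        + am * (ΓR * PIL - ΓL * PIR) / ((ap - am) * Γ)) := by
  have hdpos : 0 < ap - am := by linarith
  have hd : ap - am ≠ 0 := ne_of_gt hdpos
  have hρne := hρ.ne'
  have hΓne := hΓ.ne'
  have hρLne := hρLpos.ne'
  have hρRne := hρRpos.ne'
  have hΓLne := hΓLpos.ne'
  have hΓRne := hΓRpos.ne'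
  constructor
  · rintro ⟨h1, h2, h3, h4⟩
    have h3' : mL * ρR = mR * ρL := (div_eq_div_iff hρLne hρRne).mp h3
    have h4' : (EL - mL ^ 2 / (2 * ρL) - PIL) * ΓR
        = (ER - mR ^ 2 / (2 * ρR) - PIR) * ΓL := (div_eq_div_iff hΓLne hΓRne).mp h4
    have e1 : mL ^ 2 / (2 * ρL) * (2 * ρL) = mL ^ 2 := by field_simp
    have e2 : mR ^ 2 / (2 * ρR) * (2 * ρR) = mR ^ 2 := by field_simp
    have h4p : (2 * ρL * EL - mL ^ 2 - 2 * ρL * PIL) * ρR * ΓR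
        = (2 * ρR * ER - mR ^ 2 - 2 * ρR * PIR) * ρL * ΓL := by
      linear_combination (2 * ρL * ρR) * h4' + (ρR * ΓR) * e1 - (ρL * ΓL) * e2
    have keyL : mL * ρ * (ap - am) = ρL * m * (ap - am) := by
      linear_combination (-mL) * hρcons + ρL * h1 + ap * h3'
    have keyR : mR * ρ * (ap - am) = ρR * m * (ap - am) := by
      linear_combination (-mR) * hρcons + ρR * h1 + am * h3'
    have mLp : mL * ρ = ρL * m := mul_right_cancel₀ hd keyL
    have mRp : mR * ρ = ρR * m := mul_right_cancel₀ hd keyR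
    have mLsq : mL ^ 2 * ρ ^ 2 = ρL ^ 2 * m ^ 2 := by
      linear_combination (mL * ρ + ρL * m) * mLp
    have mRsq : mR ^ 2 * ρ ^ 2 = ρR ^ 2 * m ^ 2 := by
      linear_combination (mR * ρ + ρR * m) * mRp
    have keyE : EL * (2 * (ap - am) * Γ * ρ ^ 2 * (ρL * ρR))
        = (2 * (ap - am) * ρ ^ 2 * ΓL * E + ap * (ΓR * ρL - ΓL * ρR) * m ^ 2
            + 2 * ρ ^ 2 * ap * (ΓR * PIL - ΓL * PIR)) * (ρL * ρR) := by
      linear_combination (ap * ρ ^ 2) * h4p + (2 * ρ ^ 2 * ρL * ρR * ΓL) * h2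
        - (2 * ρ ^ 2 * ρL * ρR * EL) * hΓcons + (ap * ρR * ΓR) * mLsq
        - (ap * ρL * ΓL) * mRsq
    have keyER : ER * (2 * (ap - am) * Γ * ρ ^ 2 * (ρL * ρR))
        = (2 * (ap - am) * ρ ^ 2 * ΓR * E + am * (ΓR * ρL - ΓL * ρR) * m ^ 2
            + 2 * ρ ^ 2 * am * (ΓR * PIL - ΓL * PIR)) * (ρL * ρR) := by
      linear_combination (am * ρ ^ 2) * h4p + (2 * ρ ^ 2 * ρL * ρR * ΓR) * h2
        - (2 * ρ ^ 2 * ρL * ρR * ER) * hΓcons + (am * ρR * ΓR) * mLsq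
        - (am * ρL * ΓL) * mRsq
    have hD : (2 * (ap - am) * Γ * ρ ^ 2 * (ρL * ρR)) ≠ 0 := by positivity
    refine ⟨?_, ?_, ?_, ?_⟩
    · rw [div_mul_eq_mul_div, eq_div_iff hρne]; exact mLp
    · rw [div_mul_eq_mul_div, eq_div_iff hρne]; exact mRp
    · have hEL : EL = (2 * (ap - am) * ρ ^ 2 * ΓL * E + ap * (ΓR * ρL - ΓL * ρR) * m ^ 2
            + 2 * ρ ^ 2 * ap * (ΓR * PIL - ΓL * PIR)) * (ρL * ρR)
            / (2 * (ap - am) * Γ * ρ ^ 2 * (ρL * ρR)) := by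
        rw [eq_div_iff hD]; exact keyE
      rw [hEL]; field_simp
    · have hER : ER = (2 * (ap - am) * ρ ^ 2 * ΓR * E + am * (ΓR * ρL - ΓL * ρR) * m ^ 2
            + 2 * ρ ^ 2 * am * (ΓR * PIL - ΓL * PIR)) * (ρL * ρR)
            / (2 * (ap - am) * Γ * ρ ^ 2 * (ρL * ρR)) := by
        rw [eq_div_iff hD]; exact keyER
      rw [hER]; field_simp
  · rintro ⟨e1, e2, e3, e4⟩
    subst e1 e2 e3 e4
    have hELv : ((ΓL / Γ) * E
        + ap * (ΓR * ρL - ΓL * ρR) * m ^ 2 / (2 * (ap - am) * Γ * ρ ^ 2)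
        + ap * (ΓR * PIL - ΓL * PIR) / ((ap - am) * Γ)) * (2 * (ap - am) * Γ * ρ ^ 2)
        = 2 * (ap - am) * ρ ^ 2 * ΓL * E + ap * (ΓR * ρL - ΓL * ρR) * m ^ 2
          + 2 * ρ ^ 2 * ap * (ΓR * PIL - ΓL * PIR) := by
      field_simp
    have hERv : ((ΓR / Γ) * E
        + am * (ΓR * ρL - ΓL * ρR) * m ^ 2 / (2 * (ap - am) * Γ * ρ ^ 2)
        + am * (ΓR * PIL - ΓL * PIR) / ((ap - am) * Γ)) * (2 * (ap - am) * Γ * ρ ^ 2)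
        = 2 * (ap - am) * ρ ^ 2 * ΓR * E + am * (ΓR * ρL - ΓL * ρR) * m ^ 2
          + 2 * ρ ^ 2 * am * (ΓR * PIL - ΓL * PIR) := by
      field_simp
    have hfrac1 : (((ρL / ρ) * m) ^ 2 / (2 * ρL)) * (2 * (ap - am) * Γ * ρ ^ 2)
        = (ap - am) * Γ * ρL * m ^ 2 := by
      field_simp
    have hfrac1R : (((ρR / ρ) * m) ^ 2 / (2 * ρR)) * (2 * (ap - am) * Γ * ρ ^ 2)
        = (ap - am) * Γ * ρR * m ^ 2 := by
      field_simp
    have hfrac2 : (m ^ 2 / (2 * ρ)) * (2 * (ap - am) * ρ ^ 2)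
        = (ap - am) * ρ * m ^ 2 := by
      field_simp
    have hmul : (2 * (ap - am) * ρ ^ 2) ≠ 0 := by positivity
    have claimL : (((ΓL / Γ) * E
        + ap * (ΓR * ρL - ΓL * ρR) * m ^ 2 / (2 * (ap - am) * Γ * ρ ^ 2)
        + ap * (ΓR * PIL - ΓL * PIR) / ((ap - am) * Γ))
        - ((ρL / ρ) * m) ^ 2 / (2 * ρL) - PIL) / ΓL
        = (E - m ^ 2 / (2 * ρ) - PI) / Γ := by
      rw [div_eq_div_iff hΓLne hΓne]
      apply mul_right_cancel₀ hmul
      linear_combination hELv - hfrac1 + ΓL * hfrac2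
        + (m ^ 2 * ρL + 2 * ρ ^ 2 * PIL) * hΓcons - (m ^ 2 * ΓL) * hρcons
        - (2 * ρ ^ 2 * ΓL) * hPIcons
    have claimR : (((ΓR / Γ) * E
        + am * (ΓR * ρL - ΓL * ρR) * m ^ 2 / (2 * (ap - am) * Γ * ρ ^ 2)
        + am * (ΓR * PIL - ΓL * PIR) / ((ap - am) * Γ))
        - ((ρR / ρ) * m) ^ 2 / (2 * ρR) - PIR) / ΓR
        = (E - m ^ 2 / (2 * ρ) - PI) / Γ := by
      rw [div_eq_div_iff hΓRne hΓne]
      apply mul_right_cancel₀ hmul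
      linear_combination hERv - hfrac1R + ΓR * hfrac2
        + (m ^ 2 * ρR + 2 * ρ ^ 2 * PIR) * hΓcons - (m ^ 2 * ΓR) * hρcons
        - (2 * ρ ^ 2 * ΓR) * hPIcons
    refine ⟨?_, ?_, ?_, ?_⟩
    · field_simp
      linear_combination m * hρcons
    · field_simp
      linear_combination (2 * (ap - am) * ρ ^ 2 * E) * hΓcons
    · field_simp
    · exact claimL.trans claimR.symm
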